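/- Let g : ℝⁿ → ℝ be differentiable, let h : ℝⁿ → ℝ be convex, and set φ := g − h. Fix x₀ ∈ ℝⁿ and let 𝓛(x₀) denote the connected component containing x₀ of the sublevel set {x ∈ ℝⁿ : φ(x) ≤ φ(x₀)}. Assume the gradient ∇g is Lipschitz with constant L > 0 on 𝓛(x₀), and let x̄ ∈ 𝓛(x₀) satisfy φ(x) ≥ φ(x̄) for all x ∈ 𝓛(x₀). Let v₁ be a subgradient of h at x₀ that maximizes ‖∇g(x₀) − v‖ over all subgradients v of h at x₀, set σ₁ := ‖∇g(x₀) − v₁‖ and d := ∇g(x₀) − v₁. Then for every α ∈ [0, 1/L]: φ(x₀) − φ(x̄) ≥ φ(x₀) − φ(x₀ − α·d) ≥ (α(2 − αL)/2)·σ₁². -/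

import Mathlib

open RealInnerProductSpace

section Aux

open Set

/-- One-dimensional consequences of the descent lemma: if the gradient of `g` is
`L`-Lipschitz on a set `C` containing the segment `x₀ - s • d`, `s ∈ [0, t]`, then
`g (x₀ - t • d) ≤ g x₀ - t ⟪∇g x₀, d⟫ + L t²/2 ‖d‖²`. -/
lemma descent_step {n : ℕ} {L : ℝ} (hL : 0 < L) (g : EuclideanSpace ℝ (Fin n) → ℝ)
    (hg : Differentiable ℝ g) (C : Set (EuclideanSpace ℝ (Fin n)))
    (hLip : ∀ y ∈ C, ∀ z ∈ C, ‖gradient g y - gradient g z‖ ≤ L * ‖y - z‖)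
    (x₀ d : EuclideanSpace ℝ (Fin n)) {t : ℝ} (ht : 0 ≤ t)
    (hmem : ∀ s ∈ Set.Icc 0 t, x₀ - s • d ∈ C) :
    g (x₀ - t • d) ≤ g x₀ - t * ⟪gradient g x₀, d⟫ + L * t ^ 2 / 2 * ‖d‖ ^ 2 := by
  have hc : ∀ s : ℝ, HasDerivAt (fun u : ℝ => x₀ - u • d) (-d) s := by
    intro s
    simpa using (((hasDerivAt_id s).smul_const d).const_sub x₀)
  have hu : ∀ s : ℝ, HasDerivAt (fun u : ℝ => g (x₀ - u • d))
      (-⟪gradient g (x₀ - s • d), d⟫) s := by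
    intro s
    have h1 := ((hg (x₀ - s • d)).hasGradientAt.hasFDerivAt).comp_hasDerivAt s (hc s)
    simpa [Function.comp_def, InnerProductSpace.toDual_apply_apply, inner_neg_right] using h1
  set w : ℝ → ℝ := fun s => g (x₀ - s • d) + s * ⟪gradient g x₀, d⟫ - L * s ^ 2 / 2 * ‖d‖ ^ 2
    with hw_def
  have hw : ∀ s : ℝ, HasDerivAt w
      (-⟪gradient g (x₀ - s • d), d⟫ + ⟪gradient g x₀, d⟫ - L * s * ‖d‖ ^ 2) s := by
    intro s
    have hq : HasDerivAt (fun s : ℝ => L * s ^ 2 / 2 * ‖d‖ ^ 2) (L * s * ‖d‖ ^ 2) s := by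
      have h2 := (((hasDerivAt_pow 2 s).const_mul L).div_const 2).mul_const (‖d‖ ^ 2)
      exact h2.congr_deriv (by ring)
    have h3 := ((hu s).add ((hasDerivAt_id s).mul_const (⟪gradient g x₀, d⟫))).sub hq
    exact h3.congr_deriv (by ring)
  have hanti : AntitoneOn w (Set.Icc 0 t) := by
    apply antitoneOn_of_deriv_nonpos (convex_Icc 0 t)
    · exact fun s _ => ((hw s).continuousAt).continuousWithinAt
    · exact fun s _ => ((hw s).differentiableAt).differentiableWithinAt
    · intro s hs
      rw [interior_Icc] at hs
      rw [(hw s).deriv]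
      have hsx : x₀ - s • d ∈ C := hmem s ⟨hs.1.le, hs.2.le⟩
      have hx0 : x₀ ∈ C := by simpa using hmem 0 ⟨le_refl 0, ht⟩
      have hlip := hLip x₀ hx0 (x₀ - s • d) hsx
      have hnorm : ‖x₀ - (x₀ - s • d)‖ = s * ‖d‖ := by
        have : x₀ - (x₀ - s • d) = s • d := by abel
        rw [this, norm_smul, Real.norm_eq_abs, abs_of_pos hs.1]
      have hinner : ⟪gradient g x₀ - gradient g (x₀ - s • d), d⟫
          ≤ ‖gradient g x₀ - gradient g (x₀ - s • d)‖ * ‖d‖ := real_inner_le_norm _ _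
      rw [inner_sub_left] at hinner
      have hd0 : (0:ℝ) ≤ ‖d‖ := norm_nonneg d
      have h4 : ‖gradient g x₀ - gradient g (x₀ - s • d)‖ * ‖d‖ ≤ L * (s * ‖d‖) * ‖d‖ := by
        rw [← hnorm]
        exact mul_le_mul_of_nonneg_right hlip hd0
      have h5 : L * (s * ‖d‖) * ‖d‖ = L * s * ‖d‖ ^ 2 := by ring
      linarith
  have hwle : w t ≤ w 0 := hanti ⟨le_refl 0, ht⟩ ⟨ht, le_refl t⟩ ht
  have hw0 : w 0 = g x₀ := by simp [hw_def]
  have hwt : w t = g (x₀ - t • d) + t * ⟪gradient g x₀, d⟫ - L * t ^ 2 / 2 * ‖d‖ ^ 2 := rfl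
  rw [hwt, hw0] at hwle
  linarith

end Aux

/-- Distance estimate from the global minimum over a level-set component
(Lemma 6.1). -/
theorem distance_estimate_from_global_minimum
    (n : ℕ) (g h : EuclideanSpace ℝ (Fin n) → ℝ)
    (hg : Differentiable ℝ g)
    (hh : ConvexOn ℝ Set.univ h)
    (φ : EuclideanSpace ℝ (Fin n) → ℝ) (hφ : φ = fun z => g z - h z)
    (x₀ : EuclideanSpace ℝ (Fin n))
    (L : ℝ) (hL : 0 < L)
    (hLip : ∀ y ∈ connectedComponentIn {z | φ z ≤ φ x₀} x₀,
      ∀ z ∈ connectedComponentIn {z | φ z ≤ φ x₀} x₀,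
        ‖gradient g y - gradient g z‖ ≤ L * ‖y - z‖)
    (xbar : EuclideanSpace ℝ (Fin n))
    (hxbar : xbar ∈ connectedComponentIn {z | φ z ≤ φ x₀} x₀)
    (hmin : ∀ y ∈ connectedComponentIn {z | φ z ≤ φ x₀} x₀, φ xbar ≤ φ y)
    (v₁ : EuclideanSpace ℝ (Fin n))
    (hv₁ : ∀ y, h x₀ + ⟪v₁, y - x₀⟫ ≤ h y)
    (hmax : ∀ v : EuclideanSpace ℝ (Fin n),
      (∀ y, h x₀ + ⟪v, y - x₀⟫ ≤ h y) →
        ‖gradient g x₀ - v‖ ≤ ‖gradient g x₀ - v₁‖) :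
    ∀ α ∈ Set.Icc (0 : ℝ) (1 / L),
      φ x₀ - φ (x₀ - α • (gradient g x₀ - v₁)) ≤ φ x₀ - φ xbar ∧
      (α * (2 - α * L) / 2) * ‖gradient g x₀ - v₁‖ ^ 2 ≤
        φ x₀ - φ (x₀ - α • (gradient g x₀ - v₁)) := by
  intro α hα
  set d : EuclideanSpace ℝ (Fin n) := gradient g x₀ - v₁ with hd
  set C : Set (EuclideanSpace ℝ (Fin n)) := connectedComponentIn {z | φ z ≤ φ x₀} x₀ with hC
  have hx₀C : x₀ ∈ C := mem_connectedComponentIn (by simp : x₀ ∈ {z | φ z ≤ φ x₀})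
  have hx₀bar : φ xbar ≤ φ x₀ := hmin x₀ hx₀C
  -- trivial case d = 0
  by_cases hd0 : d = 0
  · rw [hd0]
    simp only [smul_zero, sub_zero, norm_zero]
    constructor
    · linarith
    · rw [zero_pow (by norm_num)]
      simp
  have hdpos : (0:ℝ) < ‖d‖ := norm_pos_iff.mpr hd0
  -- the comparison function χ
  set χ : ℝ → ℝ := fun s => g (x₀ - s • d) - h x₀ + s * ⟪v₁, d⟫ with hχdef
  have hχφ : ∀ s : ℝ, φ (x₀ - s • d) ≤ χ s := by
    intro s
    have h1 := hv₁ (x₀ - s • d)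
    have h2 : x₀ - s • d - x₀ = -(s • d) := by abel
    rw [h2, inner_neg_right, real_inner_smul_right] at h1
    rw [hφ]
    simp only [hχdef]
    linarith
  have hχ0 : χ 0 = φ x₀ := by simp [hχdef, hφ]
  have hid : ⟪gradient g x₀, d⟫ - ⟪v₁, d⟫ = ‖d‖ ^ 2 := by
    rw [← inner_sub_left, ← hd, real_inner_self_eq_norm_sq]
  -- χ is continuous
  have hχcont : Continuous χ := by
    have hgc : Continuous g := hg.continuous
    have h1 : Continuous fun s : ℝ => x₀ - s • d :=
      continuous_const.sub (continuous_id.smul continuous_const)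
    exact ((hgc.comp h1).sub continuous_const).add (continuous_id.mul continuous_const)
  -- χ has derivative -‖d‖² at 0
  have hc : ∀ s : ℝ, HasDerivAt (fun u : ℝ => x₀ - u • d) (-d) s := by
    intro s
    simpa using (((hasDerivAt_id s).smul_const d).const_sub x₀)
  have hχ0' : HasDerivAt χ (-‖d‖ ^ 2) 0 := by
    have h1 := ((hg (x₀ - (0:ℝ) • d)).hasGradientAt.hasFDerivAt).comp_hasDerivAt 0 (hc 0)
    have h1' : HasDerivAt (fun u : ℝ => g (x₀ - u • d)) (-⟪gradient g x₀, d⟫) 0 := by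
      simpa [Function.comp_def, InnerProductSpace.toDual_apply_apply, inner_neg_right] using h1
    have h2 := ((h1'.sub_const (h x₀)).add ((hasDerivAt_id 0).mul_const (⟪v₁, d⟫)))
    exact h2.congr_deriv (by rw [← hid]; ring)
  -- nonnegativity of the margin on [0, 1/L]
  have hmnn : ∀ s ∈ Set.Icc (0:ℝ) (1/L), 0 ≤ s * (2 - s * L) / 2 * ‖d‖ ^ 2 := by
    intro s hs
    have h1 : s * L ≤ 1 := (le_div_iff₀ hL).mp hs.2
    have h2 : 0 ≤ s * (2 - s * L) := mul_nonneg hs.1 (by linarith)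
    have h3 : 0 ≤ ‖d‖ ^ 2 := sq_nonneg _
    have h4 : 0 ≤ s * (2 - s * L) / 2 := by linarith
    exact mul_nonneg h4 h3
  -- main bootstrapping step
  have hstep : ∀ t : ℝ, 0 ≤ t → t ≤ 1/L → (∀ s ∈ Set.Icc 0 t, χ s ≤ χ 0) →
      (∀ s ∈ Set.Icc 0 t, x₀ - s • d ∈ C) ∧
      (∀ s ∈ Set.Icc 0 t, χ s + s * (2 - s * L) / 2 * ‖d‖ ^ 2 ≤ χ 0) := by
    intro t ht ht' hle
    have hmem : ∀ s ∈ Set.Icc 0 t, x₀ - s • d ∈ C := by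
      have hKconn : IsPreconnected ((fun s : ℝ => x₀ - s • d) '' Set.Icc 0 t) := by
        apply IsPreconnected.image isPreconnected_Icc
        exact (continuous_const.sub (continuous_id.smul continuous_const)).continuousOn
      have hKsub : ((fun s : ℝ => x₀ - s • d) '' Set.Icc 0 t) ⊆ {z | φ z ≤ φ x₀} := by
        rintro z ⟨s, hs, rfl⟩
        have := (hχφ s).trans (hle s hs)
        rw [hχ0] at this
        exact this
      have hx₀K : x₀ ∈ ((fun s : ℝ => x₀ - s • d) '' Set.Icc 0 t) :=
        ⟨0, ⟨le_refl 0, ht⟩, by simp⟩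
      have := hKconn.subset_connectedComponentIn hx₀K hKsub
      intro s hs
      exact this ⟨s, hs, rfl⟩
    refine ⟨hmem, fun s hs => ?_⟩
    have hmem' : ∀ σ ∈ Set.Icc (0:ℝ) s, x₀ - σ • d ∈ C := by
      intro σ hσ
      exact hmem σ ⟨hσ.1, hσ.2.trans hs.2⟩
    have hdesc := descent_step hL g hg C hLip x₀ d hs.1 hmem'
    have h2 : s * ⟪gradient g x₀, d⟫ - s * ⟪v₁, d⟫ = s * ‖d‖ ^ 2 := by
      rw [← mul_sub, hid]
    simp only [hχdef]
    have h0d : x₀ - (0:ℝ) • d = x₀ := by simp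
    rw [h0d]
    nlinarith [hdesc, h2]
  -- the set for continuous induction
  set B : Set ℝ := {t | t ∈ Set.Icc (0:ℝ) (1/L) ∧
      ∀ s ∈ Set.Icc 0 t, χ s + s * (2 - s * L) / 2 * ‖d‖ ^ 2 ≤ χ 0} with hB
  have hB0 : (0:ℝ) ∈ B := by
    refine ⟨⟨le_refl 0, by positivity⟩, ?_⟩
    intro s hs
    have : s = 0 := le_antisymm hs.2 hs.1
    subst this
    simp
  have hBne : B.Nonempty := ⟨0, hB0⟩
  have hBdd : BddAbove B := ⟨1/L, fun t ht => ht.1.2⟩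
  set T : ℝ := sSup B with hT
  have hT0 : 0 ≤ T := le_csSup hBdd hB0
  have hT1 : T ≤ 1/L := csSup_le hBne fun t ht => ht.1.2
  have hTlt : ∀ s : ℝ, 0 ≤ s → s < T → χ s + s * (2 - s * L) / 2 * ‖d‖ ^ 2 ≤ χ 0 := by
    intro s hs hsT
    obtain ⟨t, htB, hst⟩ := exists_lt_of_lt_csSup hBne hsT
    exact htB.2 s ⟨hs, hst.le⟩
  have hTB : T ∈ B := by
    refine ⟨⟨hT0, hT1⟩, ?_⟩
    intro s hs
    rcases lt_or_eq_of_le hs.2 with hlt | heq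
    · exact hTlt s hs.1 hlt
    rw [heq]
    rcases eq_or_lt_of_le hT0 with heq0 | hpos
    · rw [← heq0]
      simpa using hB0.2 0 ⟨le_refl 0, le_refl 0⟩
    · have hmc : Continuous fun u : ℝ => u * (2 - u * L) / 2 * ‖d‖ ^ 2 :=
        (((continuous_id.mul (continuous_const.sub (continuous_id.mul
          continuous_const))).div_const 2).mul continuous_const)
      have htend : Filter.Tendsto (fun u => χ u + u * (2 - u * L) / 2 * ‖d‖ ^ 2)
          (nhdsWithin T (Set.Iio T)) (nhds (χ T + T * (2 - T * L) / 2 * ‖d‖ ^ 2)) := by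
        apply Filter.Tendsto.mono_left _ nhdsWithin_le_nhds
        exact (hχcont.add hmc).tendsto T
      refine le_of_tendsto htend ?_
      filter_upwards [Ioo_mem_nhdsLT_of_mem (Set.mem_Ioc.mpr ⟨hpos, le_refl T⟩)] with u hu
      exact hTlt u hu.1.le hu.2
  -- T = 1/L
  have hTeq : T = 1/L := by
    by_contra hne
    have hTlt1 : T < 1/L := lt_of_le_of_ne hT1 hne
    -- in both cases we find t₁ ∈ (T, 1/L] with χ ≤ χ 0 on [0, t₁]
    have hkey : ∃ t₁, T < t₁ ∧ t₁ ≤ 1/L ∧ ∀ s ∈ Set.Icc 0 t₁, χ s ≤ χ 0 := by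
      rcases eq_or_lt_of_le hT0 with heq0 | hpos
      · -- T = 0 : use the negative derivative of χ at 0
        have hslope : Filter.Tendsto (slope χ 0) (nhdsWithin 0 {x | x ≠ 0})
            (nhds (-‖d‖ ^ 2)) := hasDerivAt_iff_tendsto_slope.mp hχ0'
        have hneg : (-‖d‖ ^ 2 : ℝ) < 0 := by nlinarith
        have hev : ∀ᶠ u in nhdsWithin 0 (Set.Ioi (0:ℝ)), slope χ 0 u < 0 := by
          have h1 : nhdsWithin (0:ℝ) (Set.Ioi (0:ℝ)) ≤ nhdsWithin 0 {x | x ≠ 0} :=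
            nhdsWithin_mono _ (fun x hx => ne_of_gt hx)
          exact (hslope.mono_left h1).eventually_lt_const hneg
        obtain ⟨ε, hε, hsub⟩ := mem_nhdsGT_iff_exists_Ioc_subset.mp hev
        refine ⟨min ε (1/L), by rw [← heq0]; exact lt_min hε (by positivity),
          min_le_right _ _, ?_⟩
        intro s hs
        rcases eq_or_lt_of_le hs.1 with h0 | h0
        · rw [← h0]
        · have hsε : s ∈ Set.Ioc 0 ε := ⟨h0, hs.2.trans (min_le_left _ _)⟩
          have h2 := hsub hsε
          simp only [Set.mem_setOf_eq] at h2
          rw [slope_def_field, sub_zero] at h2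
          have h3 := (div_lt_iff₀ h0).mp h2
          rw [zero_mul] at h3
          exact (sub_neg.mp h3).le
      · -- T > 0 : use continuity and the strict margin at T
        have hmT : 0 < T * (2 - T * L) / 2 * ‖d‖ ^ 2 := by
          have h1 : T * L ≤ 1 := (le_div_iff₀ hL).mp hT1
          exact mul_pos (div_pos (mul_pos hpos (by linarith)) two_pos) (pow_pos hdpos 2)
        have hχT : χ T < χ 0 :=
          lt_of_lt_of_le (lt_add_of_pos_right (χ T) hmT) (hTB.2 T ⟨hT0, le_refl T⟩)
        have hopen : IsOpen {s : ℝ | χ s < χ 0} := isOpen_lt hχcont continuous_const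
        obtain ⟨δ, hδ, hball⟩ := Metric.isOpen_iff.mp hopen T hχT
        refine ⟨min (T + δ/2) (1/L), lt_min (by linarith) hTlt1, min_le_right _ _, ?_⟩
        intro s hs
        by_cases hsT : s ≤ T
        · have h6 := hTB.2 s ⟨hs.1, hsT⟩
          have hm := hmnn s ⟨hs.1, hsT.trans hT1⟩
          exact le_trans (le_add_of_nonneg_right hm) h6
        · push_neg at hsT
          have hdist : dist s T < δ := by
            rw [Real.dist_eq, abs_of_pos (by linarith)]
            have := hs.2.trans (min_le_left _ _)
            linarith
          exact le_of_lt (hball hdist)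
    obtain ⟨t₁, ht₁T, ht₁L, ht₁⟩ := hkey
    have ht₁B : t₁ ∈ B :=
      ⟨⟨hT0.trans ht₁T.le, ht₁L⟩, (hstep t₁ (hT0.trans ht₁T.le) ht₁L ht₁).2⟩
    exact absurd (le_csSup hBdd ht₁B) (not_le.mpr ht₁T)
  -- conclude
  have hχle : ∀ s ∈ Set.Icc (0:ℝ) (1/L), χ s ≤ χ 0 := by
    intro s hs
    have hsT : s ∈ Set.Icc 0 T := by rw [hTeq]; exact hs
    have h6 := hTB.2 s hsT
    have hm := hmnn s hs
    exact le_trans (le_add_of_nonneg_right hm) h6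
  have hfin := hstep (1/L) (by positivity) (le_refl _) hχle
  have hmemα : x₀ - α • d ∈ C := hfin.1 α hα
  have hboundα : χ α + α * (2 - α * L) / 2 * ‖d‖ ^ 2 ≤ χ 0 := hfin.2 α hα
  have hφα : φ (x₀ - α • d) ≤ χ α := hχφ α
  constructor
  · have := hmin (x₀ - α • d) hmemα
    linarith
  · rw [← hχ0]
    exact le_trans ((le_sub_iff_add_le').mpr hboundα) (sub_le_sub_left hφα (χ 0))
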